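/- Let (N_k) be a sequence of positive integers. For each k, let H_k and A_k be real symmetric positive definite N_k × N_k matrices and let A*_k be an arbitrary real N_k × N_k matrix. Assume there exists a constant c > 0, independent of k, such that vᵀ A_k v ≥ c · vᵀ H_k v for every vector v ∈ ℝ^{N_k} (uniform coercivity with respect to the norms represented by H_k), and assume that ‖H_k^{-1/2} (A_k − A*_k) H_k^{-1/2}‖ → 0 as k → ∞. Then sup over μ in the complex spectrum of A*_k of inf over λ in the (real, positive) spectrum of A_k of |λ − μ|/λ tends to 0 as k → ∞. -/

import Mathlib

open scoped Matrix.Norms.L2Operator MatrixOrder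
open Matrix Filter

variable {n : Type*} [Fintype n] [DecidableEq n]


variable {n : Type*} [Fintype n] [DecidableEq n]

-- positivity of real spectrum of PosDef matrix
lemma spec_pos {A : Matrix n n ℝ} (hA : A.PosDef) {l : ℝ} (hl : l ∈ spectrum ℝ A) : 0 < l := by
  rw [spectrum.mem_iff] at hl
  rw [Matrix.isUnit_iff_isUnit_det, isUnit_iff_ne_zero, not_ne_iff] at hl
  obtain ⟨v, hv, hveq⟩ := (Matrix.exists_mulVec_eq_zero_iff).mpr hl
  have hAv : A *ᵥ v = l • v := by
    have : (algebraMap ℝ (Matrix n n ℝ)) l *ᵥ v = l • v := by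
      rw [Matrix.algebraMap_eq_diagonal]; ext i; simp [Matrix.mulVec_diagonal]
    rw [Matrix.sub_mulVec, this, sub_eq_zero] at hveq
    exact hveq.symm
  have h1 : 0 < v ⬝ᵥ A *ᵥ v := by
    have := hA.dotProduct_mulVec_pos hv
    simpa using this
  have h2 : 0 < v ⬝ᵥ v := by
    have := dotProduct_self_star_pos_iff (v := v).mpr hv
    simpa using this
  have h3 : v ⬝ᵥ A *ᵥ v = l * (v ⬝ᵥ v) := by
    rw [hAv]; simp [dotProduct_smul, smul_eq_mul]
  nlinarith

variable {n : Type*} [Fintype n] [DecidableEq n]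

section diag
variable {A U : Matrix n n ℝ} {d : n → ℝ}

lemma inv_UDU (hspec : A = U * diagonal d * Uᵀ) (hU1 : U * Uᵀ = 1) (hU2 : Uᵀ * U = 1)
    (hd : ∀ i, d i ≠ 0) : A⁻¹ = U * diagonal (fun i => (d i)⁻¹) * Uᵀ := by
  subst hspec
  apply Matrix.inv_eq_right_inv
  have h1 : diagonal d * diagonal (fun i => (d i)⁻¹) = 1 := by
    rw [Matrix.diagonal_mul_diagonal]
    have h2 : (fun i => d i * (d i)⁻¹) = fun _ => (1:ℝ) := funext fun i => mul_inv_cancel₀ (hd i)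
    rw [h2, Matrix.diagonal_one]
  calc U * diagonal d * Uᵀ * (U * diagonal (fun i => (d i)⁻¹) * Uᵀ)
      = U * (diagonal d * ((Uᵀ * U) * diagonal (fun i => (d i)⁻¹))) * Uᵀ := by
        simp only [Matrix.mul_assoc]
    _ = 1 := by rw [hU2, Matrix.one_mul, h1, Matrix.mul_one, hU1]

lemma quad_UDU (hspec : A = U * diagonal d * Uᵀ) (x : n → ℝ) :
    x ⬝ᵥ A *ᵥ x = ∑ i, d i * (Uᵀ *ᵥ x) i ^ 2 := by
  subst hspec
  rw [← Matrix.mulVec_mulVec, ← Matrix.mulVec_mulVec, Matrix.dotProduct_mulVec (A := U),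
    ← Matrix.mulVec_transpose]
  simp only [Matrix.mulVec_diagonal, dotProduct]
  congr 1; funext i; ring

end diag

variable {n : Type*} [Fintype n] [DecidableEq n]

lemma dot_symm {S : Matrix n n ℝ} (hS : Sᵀ = S) (x y : n → ℝ) :
    x ⬝ᵥ S *ᵥ y = y ⬝ᵥ S *ᵥ x := by
  rw [Matrix.dotProduct_mulVec]
  nth_rewrite 1 [← hS]
  rw [Matrix.vecMul_transpose, dotProduct_comm]

omit [Fintype n] [DecidableEq n] in
lemma transpose_of_hermitian {S : Matrix n n ℝ} (hS : S.IsHermitian) : Sᵀ = S := by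
  rw [← Matrix.conjTranspose_eq_transpose_of_trivial]; exact hS

lemma quad_expand {S : Matrix n n ℝ} (s : ℝ) (z p : n → ℝ) :
    (z - s • p) ⬝ᵥ S *ᵥ (z - s • p)
      = z ⬝ᵥ S *ᵥ z - s * (p ⬝ᵥ S *ᵥ z) - s * (z ⬝ᵥ S *ᵥ p) + s^2 * (p ⬝ᵥ S *ᵥ p) := by
  rw [Matrix.mulVec_sub, Matrix.mulVec_smul]
  simp only [sub_dotProduct, smul_dotProduct, dotProduct_sub,
    dotProduct_smul, smul_eq_mul]
  ring

-- step 1a: y ⬝ A⁻¹ y ≤ (1/c) y ⬝ H⁻¹ y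
lemma inv_quad_le {A H : Matrix n n ℝ} (hA : A.PosDef) (hH : H.PosDef) {c : ℝ} (hc : 0 < c)
    (coer : ∀ v : n → ℝ, c * (v ⬝ᵥ H *ᵥ v) ≤ v ⬝ᵥ A *ᵥ v) (y : n → ℝ) :
    y ⬝ᵥ A⁻¹ *ᵥ y ≤ (1/c) * (y ⬝ᵥ H⁻¹ *ᵥ y) := by
  have hAdet : IsUnit A.det := isUnit_iff_ne_zero.mpr hA.det_pos.ne'
  have hHdet : IsUnit H.det := isUnit_iff_ne_zero.mpr hH.det_pos.ne'
  set z := A⁻¹ *ᵥ y with hz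
  set p := H⁻¹ *ᵥ y with hp
  have hAz : A *ᵥ z = y := by rw [hz, Matrix.mulVec_mulVec, Matrix.mul_nonsing_inv _ hAdet,
    Matrix.one_mulVec]
  have hHp : H *ᵥ p = y := by rw [hp, Matrix.mulVec_mulVec, Matrix.mul_nonsing_inv _ hHdet,
    Matrix.one_mulVec]
  have h3 : z ⬝ᵥ H *ᵥ p = z ⬝ᵥ y := by rw [hHp]
  have h2 : p ⬝ᵥ H *ᵥ z = z ⬝ᵥ y := by rw [dot_symm (transpose_of_hermitian hH.1), h3]
  have h4 : p ⬝ᵥ H *ᵥ p = p ⬝ᵥ y := by rw [hHp]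
  have h5 : z ⬝ᵥ A *ᵥ z = z ⬝ᵥ y := by rw [hAz]
  have hcoer := coer z
  rw [h5] at hcoer
  have hpsd := hH.posSemidef.dotProduct_mulVec_nonneg (z - (1/c) • p)
  rw [star_trivial, quad_expand, h2, h3, h4] at hpsd
  have hyz : y ⬝ᵥ z = z ⬝ᵥ y := dotProduct_comm _ _
  have hyp : y ⬝ᵥ p = p ⬝ᵥ y := dotProduct_comm _ _
  rw [hyz, hyp]
  have h7 : 0 ≤ c^2 * (z ⬝ᵥ H *ᵥ z - 1/c * (z ⬝ᵥ y) - 1/c * (z ⬝ᵥ y) + (1/c)^2 * (p ⬝ᵥ y)) :=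
    mul_nonneg (sq_nonneg c) hpsd
  have h8 : c^2 * (z ⬝ᵥ H *ᵥ z - 1/c * (z ⬝ᵥ y) - 1/c * (z ⬝ᵥ y) + (1/c)^2 * (p ⬝ᵥ y))
      = c^2 * (z ⬝ᵥ H *ᵥ z) - 2*c*(z ⬝ᵥ y) + (p ⬝ᵥ y) := by field_simp; ring
  rw [h8] at h7
  have h9 : c*(c*(z ⬝ᵥ H *ᵥ z)) ≤ c*(z ⬝ᵥ y) := mul_le_mul_of_nonneg_left hcoer hc.le
  rw [one_div_mul_eq_div, le_div_iff₀ hc]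
  nlinarith [h7, h9]

variable {n : Type*} [Fintype n] [DecidableEq n]

lemma dot_as_norm (z : n → ℝ) :
    z ⬝ᵥ z = ‖(EuclideanSpace.equiv n ℝ).symm z‖^2 := by
  rw [EuclideanSpace.norm_eq]
  rw [Real.sq_sqrt (by positivity)]
  simp [dotProduct, sq]

lemma dot_sq_symm {M : Matrix n n ℝ} (hM : Mᵀ = M) (x : n → ℝ) :
    x ⬝ᵥ (M * M) *ᵥ x = (M *ᵥ x) ⬝ᵥ (M *ᵥ x) := by
  rw [← Matrix.mulVec_mulVec, Matrix.dotProduct_mulVec]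
  congr 1
  nth_rewrite 1 [← hM]
  rw [Matrix.vecMul_transpose]

-- step 1b
lemma weighted_mulVec_le {P H : Matrix n n ℝ} (hH : H.PosDef) (v : n → ℝ) :
    (P *ᵥ v) ⬝ᵥ H⁻¹ *ᵥ (P *ᵥ v)
      ≤ ‖(CFC.sqrt H)⁻¹ * P * (CFC.sqrt H)⁻¹‖^2 * (v ⬝ᵥ H *ᵥ v) := by
  set S := CFC.sqrt H with hSdef
  set G := S⁻¹ with hGdef
  set E := G * P * G with hEdef
  have hSS : S * S = H := CFC.sqrt_mul_sqrt_self H hH.posSemidef.nonneg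
  have hSdet : IsUnit S.det := by
    have : S.det * S.det = H.det := by rw [← Matrix.det_mul, hSS]
    have hHdet := hH.det_pos
    rw [isUnit_iff_ne_zero]
    intro h0
    rw [h0, mul_zero] at this
    exact hHdet.ne this
  have hGS : G * S = 1 := Matrix.nonsing_inv_mul _ hSdet
  have hSG : S * G = 1 := Matrix.mul_nonsing_inv _ hSdet
  have hSsym : Sᵀ = S := by
    rw [← Matrix.conjTranspose_eq_transpose_of_trivial]; exact (CFC.sqrt_nonneg H).posSemidef.1
  have hGsym : Gᵀ = G := by rw [hGdef, Matrix.transpose_nonsing_inv, hSsym]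
  have hHinv : H⁻¹ = G * G := by rw [← hSS, Matrix.mul_inv_rev]
  -- LHS = ‖E *ᵥ (S *ᵥ v)‖²
  have key : G *ᵥ (P *ᵥ v) = E *ᵥ (S *ᵥ v) := by
    rw [Matrix.mulVec_mulVec, Matrix.mulVec_mulVec, hEdef, Matrix.mul_assoc (G * P), hGS,
      Matrix.mul_one]
  have hLHS : (P *ᵥ v) ⬝ᵥ H⁻¹ *ᵥ (P *ᵥ v) = (G *ᵥ (P *ᵥ v)) ⬝ᵥ (G *ᵥ (P *ᵥ v)) := by
    rw [hHinv, dot_sq_symm hGsym]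
  have hRHS : v ⬝ᵥ H *ᵥ v = (S *ᵥ v) ⬝ᵥ (S *ᵥ v) := by
    rw [← hSS, dot_sq_symm hSsym]
  rw [hLHS, hRHS, key, dot_as_norm, dot_as_norm]
  have hb := Matrix.l2_opNorm_mulVec E ((EuclideanSpace.equiv n ℝ).symm (S *ᵥ v))
  have h2 : 0 ≤ ‖(EuclideanSpace.equiv n ℝ).symm (E *ᵥ (S *ᵥ v))‖ := norm_nonneg _
  have hb' : ‖(EuclideanSpace.equiv n ℝ).symm (E *ᵥ S *ᵥ v)‖
      ≤ ‖E‖ * ‖(EuclideanSpace.equiv n ℝ).symm (S *ᵥ v)‖ := hb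
  nlinarith [norm_nonneg ((EuclideanSpace.equiv n ℝ).symm (S *ᵥ v)), norm_nonneg E, h2, hb']


lemma eigvec_of_mem_spectrum {M : Matrix n n ℂ} {μ : ℂ} (h : μ ∈ spectrum ℂ M) :
    ∃ w : n → ℂ, w ≠ 0 ∧ M *ᵥ w = μ • w := by
  rw [spectrum.mem_iff, Matrix.isUnit_iff_isUnit_det, isUnit_iff_ne_zero, not_ne_iff] at h
  obtain ⟨w, hw, hweq⟩ := (Matrix.exists_mulVec_eq_zero_iff).mpr h
  refine ⟨w, hw, ?_⟩
  have halg : (algebraMap ℂ (Matrix n n ℂ)) μ *ᵥ w = μ • w := by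
    rw [Matrix.algebraMap_eq_diagonal]; ext i; simp [Matrix.mulVec_diagonal]
  rw [Matrix.sub_mulVec, halg, sub_eq_zero] at hweq
  exact hweq.symm

lemma exists_rel_close {A As H : Matrix n n ℝ} (hA : A.PosDef) (hH : H.PosDef) {c : ℝ}
    (hc : 0 < c) (coer : ∀ v : n → ℝ, c * (v ⬝ᵥ H *ᵥ v) ≤ v ⬝ᵥ A *ᵥ v)
    {μ : ℂ} (hμ : μ ∈ spectrum ℂ (As.map (fun x : ℝ => (x : ℂ)))) :
    ∃ l ∈ spectrum ℝ A, 0 < l ∧ ‖(l : ℂ) - μ‖ / l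
      ≤ ‖(CFC.sqrt H)⁻¹ * (A - As) * (CFC.sqrt H)⁻¹‖ / c := by
  set ε := ‖(CFC.sqrt H)⁻¹ * (A - As) * (CFC.sqrt H)⁻¹‖ with hε
  have hε0 : 0 ≤ ε := norm_nonneg _
  have hδ0 : 0 ≤ ε / c := div_nonneg hε0 hc.le
  set d : n → ℝ := hA.1.eigenvalues with hd_def
  set U : Matrix n n ℝ := (hA.1.eigenvectorUnitary : Matrix n n ℝ) with hU_def
  have hd : ∀ i, 0 < d i := hA.eigenvalues_pos
  have hmem : ∀ i, d i ∈ spectrum ℝ A := hA.1.eigenvalues_mem_spectrum_real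
  have hspec : A = U * diagonal d * Uᵀ := by
    have h := hA.1.spectral_theorem
    simpa [hU_def, hd_def, Matrix.star_eq_conjTranspose,
      Matrix.conjTranspose_eq_transpose_of_trivial, Function.comp] using h
  have hUU' : U * Uᵀ = 1 := by
    have h := (Matrix.mem_unitaryGroup_iff).mp hA.1.eigenvectorUnitary.2
    simpa [hU_def, Matrix.star_eq_conjTranspose,
      Matrix.conjTranspose_eq_transpose_of_trivial] using h
  have hUU : Uᵀ * U = 1 := by
    have h := (Matrix.mem_unitaryGroup_iff').mp hA.1.eigenvectorUnitary.2
    simpa [hU_def, Matrix.star_eq_conjTranspose,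
      Matrix.conjTranspose_eq_transpose_of_trivial] using h
  by_contra hcon
  push_neg at hcon
  have hcon' : ∀ i, ε / c < ‖(d i : ℂ) - μ‖ / d i :=
    fun i => hcon (d i) (hmem i) (hd i)
  -- eigenvector
  obtain ⟨w, hw0, hweq⟩ := eigvec_of_mem_spectrum hμ
  set a : n → ℝ := fun i => (w i).re with ha_def
  set b : n → ℝ := fun i => (w i).im with hb_def
  set P : Matrix n n ℝ := A - As with hP_def
  -- real and imaginary part equations
  have hAsa : As *ᵥ a = μ.re • a - μ.im • b := by
    funext i
    have h1 := congrArg Complex.re (congrFun hweq i)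
    simpa [Matrix.mulVec, dotProduct, Complex.re_sum, Complex.mul_re, Pi.smul_apply,
      smul_eq_mul, ha_def, hb_def] using h1
  have hAsb : As *ᵥ b = μ.re • b + μ.im • a := by
    funext i
    have h1 := congrArg Complex.im (congrFun hweq i)
    simpa [Matrix.mulVec, dotProduct, Complex.im_sum, Complex.mul_im, Pi.smul_apply,
      smul_eq_mul, ha_def, hb_def, add_comm] using h1
  -- diagonalized coordinates
  set qa : n → ℝ := Uᵀ *ᵥ a with hqa_def
  set qb : n → ℝ := Uᵀ *ᵥ b with hqb_def
  set ra : n → ℝ := Uᵀ *ᵥ (P *ᵥ a) with hra_def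
  set rb : n → ℝ := Uᵀ *ᵥ (P *ᵥ b) with hrb_def
  have hUA : ∀ x : n → ℝ, Uᵀ *ᵥ (A *ᵥ x) = fun i => d i * (Uᵀ *ᵥ x) i := by
    intro x
    have h2 : Uᵀ * A = diagonal d * Uᵀ := by
      rw [hspec, ← Matrix.mul_assoc, ← Matrix.mul_assoc, hUU, Matrix.one_mul]
    funext i
    rw [Matrix.mulVec_mulVec, h2, ← Matrix.mulVec_mulVec, Matrix.mulVec_diagonal]
  have hra : ∀ i, ra i = (d i - μ.re) * qa i + μ.im * qb i := by
    intro i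
    have : P *ᵥ a = A *ᵥ a - (μ.re • a - μ.im • b) := by
      rw [hP_def, Matrix.sub_mulVec, hAsa]
    rw [hra_def, this]
    simp only [Matrix.mulVec_sub, Matrix.mulVec_smul, hUA a, Pi.sub_apply, Pi.smul_apply,
      smul_eq_mul, ← hqa_def, ← hqb_def]
    ring
  have hrb : ∀ i, rb i = (d i - μ.re) * qb i - μ.im * qa i := by
    intro i
    have : P *ᵥ b = A *ᵥ b - (μ.re • b + μ.im • a) := by
      rw [hP_def, Matrix.sub_mulVec, hAsb]
    rw [hrb_def, this]
    simp only [Matrix.mulVec_sub, Matrix.mulVec_add, Matrix.mulVec_smul, hUA b, Pi.sub_apply,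
      Pi.add_apply, Pi.smul_apply, smul_eq_mul, ← hqa_def, ← hqb_def]
    ring
  -- pointwise identity
  have hpt : ∀ i, ra i ^ 2 + rb i ^ 2
      = ((d i - μ.re)^2 + μ.im^2) * (qa i ^ 2 + qb i ^ 2) := by
    intro i; rw [hra i, hrb i]; ring
  -- strict bound on each eigenvalue
  have habs : ∀ i, (ε/c)^2 * (d i)^2 < (d i - μ.re)^2 + μ.im^2 := by
    intro i
    have h1 := hcon' i
    have h2 : ε / c * d i < ‖(d i : ℂ) - μ‖ := by
      rw [lt_div_iff₀ (hd i)] at h1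
      linarith
    have h3 : (‖(d i : ℂ) - μ‖)^2 = (d i - μ.re)^2 + μ.im^2 := by
      rw [Complex.sq_norm, Complex.normSq_apply]
      simp [Complex.sub_re, Complex.sub_im]
      ring
    have h4 : 0 ≤ ε / c * d i := mul_nonneg hδ0 (hd i).le
    nlinarith [h2, h4]
  -- a nonzero coordinate
  have hqex : ∃ i, 0 < qa i ^ 2 + qb i ^ 2 := by
    have hab : a ≠ 0 ∨ b ≠ 0 := by
      by_contra hab
      push_neg at hab
      apply hw0
      funext i
      have h1 : a i = 0 := by rw [hab.1]; rfl
      have h2 : b i = 0 := by rw [hab.2]; rfl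
      exact Complex.ext h1 h2
    have hUinj : ∀ x : n → ℝ, x ≠ 0 → Uᵀ *ᵥ x ≠ 0 := by
      intro x hx hUx
      apply hx
      have : (U * Uᵀ) *ᵥ x = U *ᵥ (Uᵀ *ᵥ x) := (Matrix.mulVec_mulVec _ _ _).symm
      rw [hUU', Matrix.one_mulVec, hUx, Matrix.mulVec_zero] at this
      exact this
    have hq : qa ≠ 0 ∨ qb ≠ 0 := by
      rcases hab with h | h
      · exact Or.inl (hUinj a h)
      · exact Or.inr (hUinj b h)
    rcases hq with h | h
    · obtain ⟨i, hi⟩ := Function.ne_iff.mp h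
      exact ⟨i, by nlinarith [sq_nonneg (qb i),
        (sq_nonneg (qa i)).lt_of_ne (Ne.symm (pow_ne_zero 2 hi))]⟩
    · obtain ⟨i, hi⟩ := Function.ne_iff.mp h
      exact ⟨i, by nlinarith [sq_nonneg (qa i),
        (sq_nonneg (qb i)).lt_of_ne (Ne.symm (pow_ne_zero 2 hi))]⟩
  obtain ⟨i₀, hi₀⟩ := hqex
  -- strict sum inequality
  have hsum : ∑ i, (ε/c)^2 * (d i * (qa i ^2 + qb i ^2))
      < ∑ i, (ra i ^2 + rb i ^2) / d i := by
    apply Finset.sum_lt_sum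
    · intro i _
      rw [hpt i, le_div_iff₀ (hd i)]
      nlinarith [sq_nonneg (qa i), sq_nonneg (qb i), (hd i), habs i]
    · refine ⟨i₀, Finset.mem_univ i₀, ?_⟩
      rw [hpt i₀, lt_div_iff₀ (hd i₀)]
      nlinarith [habs i₀, hd i₀, hi₀]
  -- rewrite sums as quadratic forms
  have hAinv : A⁻¹ = U * diagonal (fun i => (d i)⁻¹) * Uᵀ :=
    inv_UDU hspec hUU' hUU (fun i => (hd i).ne')
  have hsumL : ∑ i, (ε/c)^2 * (d i * (qa i ^2 + qb i ^2))
      = (ε/c)^2 * (a ⬝ᵥ A *ᵥ a + b ⬝ᵥ A *ᵥ b) := by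
    rw [quad_UDU hspec a, quad_UDU hspec b, ← Finset.sum_add_distrib, Finset.mul_sum]
    congr 1; funext i; rw [← hqa_def, ← hqb_def]; ring
  have hsumR : ∑ i, (ra i ^2 + rb i ^2) / d i
      = (P *ᵥ a) ⬝ᵥ A⁻¹ *ᵥ (P *ᵥ a) + (P *ᵥ b) ⬝ᵥ A⁻¹ *ᵥ (P *ᵥ b) := by
    rw [quad_UDU hAinv (P *ᵥ a), quad_UDU hAinv (P *ᵥ b), ← Finset.sum_add_distrib]
    congr 1; funext i; rw [← hra_def, ← hrb_def]
    field_simp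
  -- upper bound on the right side
  have hchain : ∀ x : n → ℝ, (P *ᵥ x) ⬝ᵥ A⁻¹ *ᵥ (P *ᵥ x) ≤ (ε/c)^2 * (x ⬝ᵥ A *ᵥ x) := by
    intro x
    have h1 := inv_quad_le hA hH hc coer (P *ᵥ x)
    have h2 := weighted_mulVec_le (P := P) hH x
    have h3 : x ⬝ᵥ H *ᵥ x ≤ (1/c) * (x ⬝ᵥ A *ᵥ x) := by
      rw [one_div_mul_eq_div, le_div_iff₀ hc]
      linarith [coer x]
    have h4 : 0 ≤ (P *ᵥ x) ⬝ᵥ H⁻¹ *ᵥ (P *ᵥ x) := by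
      have := (hH.inv).posSemidef.dotProduct_mulVec_nonneg (P *ᵥ x)
      simpa using this
    have h5 : 0 ≤ x ⬝ᵥ H *ᵥ x := by
      have := hH.posSemidef.dotProduct_mulVec_nonneg x
      simpa using this
    calc (P *ᵥ x) ⬝ᵥ A⁻¹ *ᵥ (P *ᵥ x) ≤ (1/c) * ((P *ᵥ x) ⬝ᵥ H⁻¹ *ᵥ (P *ᵥ x)) := h1
      _ ≤ (1/c) * (ε^2 * (x ⬝ᵥ H *ᵥ x)) := by
          apply mul_le_mul_of_nonneg_left _ (by positivity)
          exact h2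
      _ ≤ (1/c) * (ε^2 * ((1/c) * (x ⬝ᵥ A *ᵥ x))) := by
          apply mul_le_mul_of_nonneg_left _ (by positivity)
          exact mul_le_mul_of_nonneg_left h3 (by positivity)
      _ = (ε/c)^2 * (x ⬝ᵥ A *ᵥ x) := by ring
  have hfinal : ∑ i, (ra i ^2 + rb i ^2) / d i
      ≤ ∑ i, (ε/c)^2 * (d i * (qa i ^2 + qb i ^2)) := by
    rw [hsumL, hsumR, mul_add]
    exact add_le_add (hchain a) (hchain b)
  linarith [hsum, hfinal]


/-- Proposition 1 of the paper, in matrix form. For a sequence of symmetric positive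
definite matrices `A k` (stiffness), `H k` (Gram matrix of the `H¹` norm), and arbitrary
approximations `Astar k`, uniform coercivity plus convergence of the normalized
perturbation `H^{-1/2}(A - A*)H^{-1/2}` to zero imply that the relative distance from the
complex spectrum of `A*` to the (real, positive) spectrum of `A` tends to zero. -/
theorem relative_spectral_convergence
    (N : ℕ → ℕ) (hN : ∀ k, 0 < N k)
    (H A Astar : ∀ k, Matrix (Fin (N k)) (Fin (N k)) ℝ)
    (hH : ∀ k, (H k).PosDef) (hA : ∀ k, (A k).PosDef)
    (c : ℝ) (hc : 0 < c)
    (coer : ∀ k (v : Fin (N k) → ℝ),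
      c * (v ⬝ᵥ (H k).mulVec v) ≤ v ⬝ᵥ (A k).mulVec v)
    (hconv : Tendsto (fun k =>
        ‖(CFC.sqrt (H k))⁻¹ * (A k - Astar k) * (CFC.sqrt (H k))⁻¹‖)
      atTop (nhds 0)) :
    Tendsto (fun k =>
      sSup ((fun μ : ℂ =>
          sInf ((fun l : ℝ => ‖(l : ℂ) - μ‖ / l) '' spectrum ℝ (A k))) ''
        spectrum ℂ ((Astar k).map (fun x : ℝ => (x : ℂ))))) atTop (nhds 0) := by
  set ε : ℕ → ℝ := fun k =>
    ‖(CFC.sqrt (H k))⁻¹ * (A k - Astar k) * (CFC.sqrt (H k))⁻¹‖ with hεdef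
  set f : ℕ → ℝ := fun k =>
    sSup ((fun μ : ℂ =>
        sInf ((fun l : ℝ => ‖(l : ℂ) - μ‖ / l) '' spectrum ℝ (A k))) ''
      spectrum ℂ ((Astar k).map (fun x : ℝ => (x : ℂ)))) with hfdef
  have hbounds : ∀ k, 0 ≤ f k ∧ f k ≤ ε k / c := by
    intro k
    haveI : Nonempty (Fin (N k)) := ⟨⟨0, hN k⟩⟩
    have hδ0 : 0 ≤ ε k / c := div_nonneg (norm_nonneg _) hc.le
    -- spectrum of the complex matrix is nonempty
    have hs_ne : (spectrum ℂ ((Astar k).map (fun x : ℝ => (x : ℂ)))).Nonempty :=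
      spectrum.nonempty _
    -- each inner sInf is between 0 and ε k / c
    have hinner : ∀ μ ∈ spectrum ℂ ((Astar k).map (fun x : ℝ => (x : ℂ))),
        0 ≤ sInf ((fun l : ℝ => ‖(l : ℂ) - μ‖ / l) '' spectrum ℝ (A k)) ∧
        sInf ((fun l : ℝ => ‖(l : ℂ) - μ‖ / l) '' spectrum ℝ (A k)) ≤ ε k / c := by
      intro μ hμ
      have hlb : ∀ x ∈ (fun l : ℝ => ‖(l : ℂ) - μ‖ / l) '' spectrum ℝ (A k),
          0 ≤ x := by
        rintro x ⟨l, hl, rfl⟩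
        exact div_nonneg (norm_nonneg _) (spec_pos (hA k) hl).le
      obtain ⟨l, hlmem, hlpos, hlle⟩ := exists_rel_close (hA k) (hH k) hc (coer k) hμ
      constructor
      · exact Real.sInf_nonneg hlb
      · refine le_trans (csInf_le ⟨0, fun x hx => hlb x hx⟩ ⟨l, hlmem, rfl⟩) hlle
    constructor
    · obtain ⟨μ0, hμ0⟩ := hs_ne
      have hbdd : BddAbove ((fun μ : ℂ =>
          sInf ((fun l : ℝ => ‖(l : ℂ) - μ‖ / l) '' spectrum ℝ (A k))) ''
        spectrum ℂ ((Astar k).map (fun x : ℝ => (x : ℂ)))) := by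
        refine ⟨ε k / c, ?_⟩
        rintro x ⟨μ, hμ, rfl⟩
        exact (hinner μ hμ).2
      exact le_trans (hinner μ0 hμ0).1 (le_csSup hbdd ⟨μ0, hμ0, rfl⟩)
    · apply Real.sSup_le _ hδ0
      rintro x ⟨μ, hμ, rfl⟩
      exact (hinner μ hμ).2
  have hδconv : Tendsto (fun k => ε k / c) atTop (nhds 0) := by
    have := hconv.div_const c
    simpa using this
  exact squeeze_zero (fun k => (hbounds k).1) (fun k => (hbounds k).2) hδconv
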